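/- Let u : ℝ → ℝ be even, non-increasing on [0,∞), with ‖u‖_{L²(ℝ)} ≤ 1. Then the series bound ∫_{|x|>1/2} (e^{π u(x)²} − 1) dx ≤ π‖u‖²_{L²} · (1 + Σ_{k≥1} (π‖u‖²_{L²})^k / ((k+1)!·k)) holds; in particular ∫_{|x|>1/2}(e^{π u²} − 1) dx is bounded by a universal constant. -/

import Mathlib

open MeasureTheory

lemma aux_exp_mono {t s : ℝ} (ht : 0 ≤ t) (hts : t ≤ s) :
    Real.exp t - 1 ≤ t + (Real.exp s - 1 - s) := by
  have h1 : Real.exp t * (s - t + 1) ≤ Real.exp t * Real.exp (s - t) :=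
    mul_le_mul_of_nonneg_left (by linarith [Real.add_one_le_exp (s - t)]) (Real.exp_pos t).le
  rw [← Real.exp_add] at h1
  have h3 : t + (s - t) = s := by ring
  rw [h3] at h1
  have h2 : 1 ≤ Real.exp t := Real.one_le_exp ht
  nlinarith

lemma aux_exp_quad {s : ℝ} (hs : 0 ≤ s) : Real.exp s - 1 - s ≤ s ^ 2 * Real.exp s := by
  have h := Real.add_one_le_exp (-s)
  have h2 : Real.exp (-s) * Real.exp s = 1 := by rw [← Real.exp_add]; simp
  have h3 := mul_le_mul_of_nonneg_right h
    (mul_nonneg (by linarith : (0:ℝ) ≤ 1 + s) (Real.exp_pos s).le)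
  have h4 : Real.exp (-s) * ((1 + s) * Real.exp s) = 1 + s := by
    rw [show Real.exp (-s) * ((1 + s) * Real.exp s)
        = Real.exp (-s) * Real.exp s * (1 + s) by ring, h2, one_mul]
  rw [h4] at h3
  nlinarith [h3]

lemma aux_exp_series (s : ℝ) :
    Real.exp s - 1 - s = ∑' k : ℕ, s ^ (k + 2) / (Nat.factorial (k + 2) : ℝ) := by
  have hsum : Summable (fun n : ℕ => s ^ n / (Nat.factorial n : ℝ)) :=
    Real.summable_pow_div_factorial s
  have hexp : Real.exp s = ∑' n : ℕ, s ^ n / (Nat.factorial n : ℝ) := by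
    rw [Real.exp_eq_exp_ℝ, NormedSpace.exp_eq_tsum_div]
  have hsum1 : Summable (fun n : ℕ => s ^ (n + 1) / (Nat.factorial (n + 1) : ℝ)) :=
    (summable_nat_add_iff 1).mpr hsum
  have h1 := hsum.tsum_eq_zero_add
  have h2 := hsum1.tsum_eq_zero_add
  rw [hexp, h1, h2]
  simp [Nat.factorial]

theorem stmt_5 (u : ℝ → ℝ) (heven : ∀ x, u (-x) = u x)
    (hmono : AntitoneOn u (Set.Ici 0))
    (hint : Integrable (fun x => u x ^ 2))
    (hnorm : ∫ y, u y ^ 2 ≤ 1) :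
    (∫ x in {x : ℝ | |x| > 1/2}, (Real.exp (Real.pi * u x ^ 2) - 1)) ≤
      Real.pi * (∫ y, u y ^ 2) *
        (1 + ∑' k : ℕ, (Real.pi * ∫ y, u y ^ 2) ^ (k + 1) /
          ((Nat.factorial (k + 2) : ℝ) * (k + 1))) := by
  have hpi : (0:ℝ) < Real.pi := Real.pi_pos
  set I := ∫ y, u y ^ 2 with hIdef
  have hI0 : 0 ≤ I := integral_nonneg fun x => sq_nonneg _
  set a := Real.pi * I with hadef
  clear_value I
  clear_value a
  have ha0 : 0 ≤ a := by rw [hadef]; exact mul_nonneg hpi.le hI0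
  have hapi : a ≤ Real.pi := by nlinarith
  -- u is nonnegative on (0, ∞)
  have hu0 : ∀ x : ℝ, 0 < x → 0 ≤ u x := by
    intro x hx
    by_contra hneg
    push_neg at hneg
    set c := u x ^ 2 with hcdef
    have hc : 0 < c := by nlinarith
    have hconst : IntegrableOn (fun _ : ℝ => c) (Set.Ici x) := by
      refine Integrable.mono' (hint.integrableOn) aestronglyMeasurable_const ?_
      refine (ae_restrict_iff' measurableSet_Ici).2 (Filter.Eventually.of_forall fun y hy => ?_)
      have h1 : u y ≤ u x := hmono hx.le (hx.le.trans hy) hy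
      rw [Real.norm_eq_abs, abs_of_pos hc]
      nlinarith
    have := (integrable_const_iff (c := c)).1 hconst
    rcases this with h | h
    · exact hc.ne' h
    · have h := h.measure_univ_lt_top
      rw [Measure.restrict_apply_univ, Real.volume_Ici] at h
      exact (lt_irrefl _ h).elim
  -- the integral over (0,∞) equals I/2
  have hIoi : ∫ y in Set.Ioi (0:ℝ), u y ^ 2 = I / 2 := by
    have h1 : ∫ y in Set.Iic (0:ℝ), u y ^ 2 = ∫ y in Set.Ioi (0:ℝ), u y ^ 2 := by
      have : ∫ y in Set.Iic (0:ℝ), u y ^ 2 = ∫ y in Set.Iic (0:ℝ), u (-y) ^ 2 := by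
        simp_rw [heven]
      have h' := integral_comp_neg_Iic (0:ℝ) (fun y => u y ^ 2)
      rw [neg_zero] at h'
      exact this.trans h'
    have h2 := intervalIntegral.integral_Iic_add_Ioi (b := (0:ℝ)) hint.integrableOn hint.integrableOn
    rw [h1] at h2
    rw [← hIdef] at h2
    linarith
  -- key pointwise bound
  have hkey : ∀ x : ℝ, 1/2 ≤ x → u x ^ 2 ≤ I / (2 * x) := by
    intro x hx
    have hx0 : 0 < x := by linarith
    have hle : ∀ y ∈ Set.Ioc (0:ℝ) x, u x ^ 2 ≤ u y ^ 2 := by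
      intro y hy
      have h1 : u x ≤ u y := hmono hy.1.le hx0.le hy.2
      exact pow_le_pow_left₀ (hu0 x hx0) h1 2
    have hvol : volume (Set.Ioc (0:ℝ) x) ≠ ⊤ := by
      simp [Real.volume_Ioc]
    have hc := setIntegral_ge_of_const_le measurableSet_Ioc hvol hle
      (hint.integrableOn)
    rw [Real.volume_real_Ioc_of_le hx0.le, sub_zero, smul_eq_mul] at hc
    have hsub : ∫ y in Set.Ioc (0:ℝ) x, u y ^ 2 ≤ ∫ y in Set.Ioi (0:ℝ), u y ^ 2 := by
      refine setIntegral_mono_set hint.integrableOn ?_ ?_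
      · exact Filter.Eventually.of_forall fun y => sq_nonneg _
      · exact (Set.Ioc_subset_Ioi_self).eventuallyLE
    rw [hIoi] at hsub
    rw [le_div_iff₀ (by positivity)]
    nlinarith

  -- the dominating function G
  set G : ℝ → ℝ := fun x => Real.exp (a / (2 * |x|)) - 1 - a / (2 * |x|) with hGdef
  have hGnonneg : ∀ x : ℝ, 0 ≤ G x := by
    intro x
    have := Real.add_one_le_exp (a / (2 * |x|))
    simp only [hGdef]
    linarith
  have hGcont : ContinuousOn G {x : ℝ | x ≠ 0} := by
    have hden : ∀ x ∈ {x : ℝ | x ≠ 0}, (2 : ℝ) * |x| ≠ 0 := by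
      intro x hx
      simp only [Set.mem_setOf_eq] at hx
      simp [abs_eq_zero, hx]
    have hs : ContinuousOn (fun x : ℝ => a / (2 * |x|)) {x : ℝ | x ≠ 0} :=
      continuousOn_const.div ((continuous_const.mul continuous_abs).continuousOn) hden
    exact ((Real.continuous_exp.comp_continuousOn hs).sub continuousOn_const).sub hs
  -- pointwise bound for G on Ioi (1/2)
  have hGboundIoi : ∀ x ∈ Set.Ioi (1/2 : ℝ),
      ‖G x‖ ≤ (a ^ 2 * Real.exp Real.pi) * x ^ (-(2:ℝ)) := by
    intro x hx
    simp only [Set.mem_Ioi] at hx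
    have hx0 : (0:ℝ) < x := by linarith
    have habs : |x| = x := abs_of_pos hx0
    have hs0 : 0 ≤ a / (2 * x) := by positivity
    have hsle : a / (2 * x) ≤ a := by
      rw [div_le_iff₀ (by positivity)]
      nlinarith
    have hxr : x ^ (-(2:ℝ)) = (x ^ 2)⁻¹ := by
      rw [Real.rpow_neg hx0.le, show ((2:ℝ)) = ((2:ℕ) : ℝ) by norm_num, Real.rpow_natCast]
    rw [Real.norm_eq_abs, abs_of_nonneg (hGnonneg x), hxr]
    simp only [hGdef, habs]
    have h1 := aux_exp_quad hs0
    have h2 : Real.exp (a / (2 * x)) ≤ Real.exp Real.pi :=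
      Real.exp_le_exp.2 (hsle.trans hapi)
    have h3 : (a / (2 * x)) ^ 2 ≤ a ^ 2 * (x ^ 2)⁻¹ := by
      rw [div_pow]
      rw [div_le_iff₀ (by positivity)]
      have : (2 * x) ^ 2 = 4 * x ^ 2 := by ring
      rw [this]
      have h4 : (0:ℝ) < x ^ 2 := by positivity
      have h5 : a ^ 2 * (x ^ 2)⁻¹ * (x ^ 2) = a ^ 2 := by field_simp
      nlinarith [sq_nonneg a]
    calc Real.exp (a / (2 * x)) - 1 - a / (2 * x)
        ≤ (a / (2 * x)) ^ 2 * Real.exp (a / (2 * x)) := h1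
      _ ≤ (a / (2 * x)) ^ 2 * Real.exp Real.pi :=
          mul_le_mul_of_nonneg_left h2 (sq_nonneg _)
      _ ≤ (a ^ 2 * (x ^ 2)⁻¹) * Real.exp Real.pi :=
          mul_le_mul_of_nonneg_right h3 (Real.exp_pos _).le
      _ = (a ^ 2 * Real.exp Real.pi) * (x ^ 2)⁻¹ := by ring
  -- integrability of G
  have hGintIoi : IntegrableOn G (Set.Ioi (1/2 : ℝ)) := by
    refine Integrable.mono'
      ((integrableOn_Ioi_rpow_of_lt (a := (-2 : ℝ)) (by norm_num) (by norm_num : (0:ℝ) < 1/2)).const_mul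
        (a ^ 2 * Real.exp Real.pi)) ?_ ?_
    · exact (hGcont.mono fun x hx => by
        simp only [Set.mem_Ioi] at hx
        simp only [Set.mem_setOf_eq]
        intro h
        rw [h] at hx
        norm_num at hx).aestronglyMeasurable measurableSet_Ioi
    · exact (ae_restrict_iff' measurableSet_Ioi).2
        (Filter.Eventually.of_forall fun x hx => hGboundIoi x hx)
  have hGintIio : IntegrableOn G (Set.Iio (-(1/2) : ℝ)) := by
    have m : MeasurableEmbedding (Neg.neg : ℝ → ℝ) :=
      (Homeomorph.neg ℝ).measurableEmbedding
    rw [← Measure.map_neg_eq_self (volume : Measure ℝ)]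
    refine m.integrableOn_map_iff.mpr ?_
    have hpre : ((Neg.neg : ℝ → ℝ) ⁻¹' Set.Iio (-(1/2))) = Set.Ioi (1/2 : ℝ) := by
      ext z
      simp only [Set.mem_preimage, Set.mem_Iio, Set.mem_Ioi]
      constructor <;> intro h <;> linarith
    have hcomp : (G ∘ (Neg.neg : ℝ → ℝ)) = G := by
      funext z
      simp only [Function.comp_apply, hGdef, abs_neg]
    rw [hpre, hcomp]
    exact hGintIoi
  -- symmetry of the integral of G
  have hGeq : ∫ x in Set.Iio (-(1/2) : ℝ), G x = ∫ x in Set.Ioi (1/2 : ℝ), G x := by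
    have h1 : ∫ x in Set.Ioi (1/2 : ℝ), G x = ∫ x in Set.Ioi (1/2 : ℝ), G (-x) := by
      refine setIntegral_congr_fun measurableSet_Ioi fun x _ => ?_
      simp only [hGdef, abs_neg]
    have h2 := integral_comp_neg_Ioi (1/2 : ℝ) G
    have h3 : ∫ x in Set.Iio (-(1/2) : ℝ), G x = ∫ x in Set.Iic (-(1/2) : ℝ), G x :=
      setIntegral_congr_set Iio_ae_eq_Iic
    rw [h3, ← h2, ← h1]
  -- the series expansion of the integral of G over Ioi (1/2)
  set c : ℕ → ℝ := fun k => (a/2) ^ (k+2) / (Nat.factorial (k+2) : ℝ) with hcdef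
  set F : ℕ → ℝ → ℝ := fun k x => c k * x ^ (-((k:ℝ)+2)) with hFdef
  have hcnn : ∀ k, 0 ≤ c k := by
    intro k
    have : (0:ℝ) < (Nat.factorial (k+2) : ℝ) := by positivity
    positivity
  have hexplt : ∀ k : ℕ, -((k:ℝ)+2) < -1 := by
    intro k
    have : (0:ℝ) ≤ (k:ℝ) := Nat.cast_nonneg k
    linarith
  have hFint : ∀ k, IntegrableOn (F k) (Set.Ioi (1/2:ℝ)) := fun k =>
    (integrableOn_Ioi_rpow_of_lt (hexplt k) (by norm_num : (0:ℝ) < 1/2)).const_mul (c k)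
  have hrp : ∀ k : ℕ, ((2:ℝ)) ^ ((k:ℝ)+1) = (2:ℝ) ^ (k+1 : ℕ) := by
    intro k
    rw [show ((k:ℝ)+1) = ((k+1:ℕ) : ℝ) by push_cast; ring, Real.rpow_natCast]
  have hrpow_int : ∀ k : ℕ, ∫ x in Set.Ioi (1/2:ℝ), x ^ (-((k:ℝ)+2))
      = (2:ℝ) ^ (k+1:ℕ) / ((k:ℝ)+1) := by
    intro k
    rw [integral_Ioi_rpow_of_lt (hexplt k) (by norm_num : (0:ℝ) < 1/2)]
    rw [show (-((k:ℝ)+2) + 1) = -((k:ℝ)+1) by ring]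
    rw [one_div, Real.inv_rpow (by norm_num : (0:ℝ) ≤ 2), Real.rpow_neg (by norm_num : (0:ℝ) ≤ 2),
      inv_inv, hrp k]
    have hne : (-1 + -(k:ℝ)) ≠ 0 := by
      have : (0:ℝ) ≤ (k:ℝ) := Nat.cast_nonneg k
      intro h
      linarith
    field_simp
  have hFval : ∀ k, ∫ x in Set.Ioi (1/2:ℝ), F k x = c k * ((2:ℝ)^(k+1:ℕ)/((k:ℝ)+1)) := by
    intro k
    simp only [hFdef]
    rw [integral_const_mul, hrpow_int k]
  have hnormval : ∀ k, ∫ x in Set.Ioi (1/2:ℝ), ‖F k x‖ = c k * ((2:ℝ)^(k+1:ℕ)/((k:ℝ)+1)) := by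
    intro k
    rw [← hFval k]
    refine setIntegral_congr_fun measurableSet_Ioi fun x hx => ?_
    simp only [Set.mem_Ioi] at hx
    have hx0 : (0:ℝ) ≤ x := by linarith
    rw [Real.norm_eq_abs, abs_of_nonneg]
    exact mul_nonneg (hcnn k) (Real.rpow_nonneg hx0 _)
  have hvsum : Summable (fun k : ℕ => c k * ((2:ℝ)^(k+1:ℕ)/((k:ℝ)+1))) := by
    refine Summable.of_nonneg_of_le (fun k => ?_) (fun k => ?_)
      ((summable_nat_add_iff 2).mpr (Real.summable_pow_div_factorial a))
    · have hk1 : (0:ℝ) < (k:ℝ) + 1 := by positivity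
      positivity
    · have hfac : (0:ℝ) < (Nat.factorial (k+2) : ℝ) := by positivity
      have hk1 : (0:ℝ) < (k:ℝ) + 1 := by positivity
      have heq : c k * ((2:ℝ)^(k+1:ℕ)/((k:ℝ)+1))
          = a^(k+2) / (Nat.factorial (k+2) : ℝ)
            * ((2:ℝ)^(k+1:ℕ) / ((2:ℝ)^(k+2:ℕ) * ((k:ℝ)+1))) := by
        simp only [hcdef]
        rw [div_pow]
        field_simp
      rw [heq]
      have hb : (2:ℝ)^(k+1:ℕ) / ((2:ℝ)^(k+2:ℕ) * ((k:ℝ)+1)) ≤ 1 := by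
        rw [div_le_one (by positivity)]
        have h1 : (1:ℝ) ≤ (k:ℝ) + 1 := by
          have : (0:ℝ) ≤ (k:ℝ) := Nat.cast_nonneg k
          linarith
        have h2 : (2:ℝ)^(k+2:ℕ) = 2 * (2:ℝ)^(k+1:ℕ) := by
          rw [pow_succ]
          ring
        nlinarith [pow_pos (by norm_num : (0:ℝ) < 2) (k+1)]
      calc a^(k+2) / (Nat.factorial (k+2) : ℝ)
            * ((2:ℝ)^(k+1:ℕ) / ((2:ℝ)^(k+2:ℕ) * ((k:ℝ)+1)))
          ≤ a^(k+2) / (Nat.factorial (k+2) : ℝ) * 1 :=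
            mul_le_mul_of_nonneg_left hb (by positivity)
        _ = a^(k+2) / (Nat.factorial (k+2) : ℝ) := by ring
  have hsummable_norm : Summable (fun k : ℕ => ∫ x in Set.Ioi (1/2:ℝ), ‖F k x‖) := by
    have : (fun k : ℕ => ∫ x in Set.Ioi (1/2:ℝ), ‖F k x‖)
        = fun k => c k * ((2:ℝ)^(k+1:ℕ)/((k:ℝ)+1)) := funext fun k => hnormval k
    rw [this]
    exact hvsum
  have hser := integral_tsum_of_summable_integral_norm
    (μ := volume.restrict (Set.Ioi (1/2:ℝ))) (F := F) hFint hsummable_norm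
  have hGrepr : ∀ x ∈ Set.Ioi (1/2:ℝ), G x = ∑' k, F k x := by
    intro x hx
    simp only [Set.mem_Ioi] at hx
    have hx0 : (0:ℝ) < x := by linarith
    have habs : |x| = x := abs_of_pos hx0
    have hterm : ∀ k : ℕ, F k x = (a/(2*x))^(k+2) / (Nat.factorial (k+2) : ℝ) := by
      intro k
      simp only [hFdef, hcdef]
      rw [Real.rpow_neg hx0.le, show ((k:ℝ)+2) = ((k+2:ℕ) : ℝ) by push_cast; ring,
        Real.rpow_natCast]
      have hfac : (0:ℝ) < (Nat.factorial (k+2) : ℝ) := by positivity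
      rw [div_pow, div_pow, mul_pow]
      have hx2 : x ^ (k+2) ≠ 0 := by positivity
      field_simp
    simp only [hGdef, habs]
    rw [aux_exp_series (a/(2*x))]
    exact (tsum_congr hterm).symm
  have hGIoi_val : ∫ x in Set.Ioi (1/2:ℝ), G x
      = ∑' k : ℕ, c k * ((2:ℝ)^(k+1:ℕ)/((k:ℝ)+1)) := by
    rw [setIntegral_congr_fun measurableSet_Ioi hGrepr, ← hser]
    exact tsum_congr hFval
  -- region decomposition
  have hR : {x : ℝ | |x| > 1/2} = Set.Iio (-(1/2):ℝ) ∪ Set.Ioi (1/2:ℝ) := by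
    ext x
    simp only [Set.mem_setOf_eq, Set.mem_union, Set.mem_Iio, Set.mem_Ioi, gt_iff_lt, lt_abs]
    constructor
    · rintro (h | h)
      · exact Or.inr h
      · exact Or.inl (by linarith)
    · rintro (h | h)
      · exact Or.inr (by linarith)
      · exact Or.inl h
  have hdisj : Disjoint (Set.Iio (-(1/2):ℝ)) (Set.Ioi (1/2:ℝ)) := by
    rw [Set.disjoint_left]
    intro x hx hx'
    simp only [Set.mem_Iio] at hx
    simp only [Set.mem_Ioi] at hx'
    linarith
  have hRmeas : MeasurableSet {x : ℝ | |x| > 1/2} := by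
    rw [hR]
    exact measurableSet_Iio.union measurableSet_Ioi
  have hGR : IntegrableOn G {x : ℝ | |x| > 1/2} := by
    rw [hR]
    exact hGintIio.union hGintIoi
  have hgR : IntegrableOn (fun x => Real.pi * u x ^ 2 + G x) {x : ℝ | |x| > 1/2} :=
    (hint.integrableOn.const_mul Real.pi).add hGR
  -- the main comparison
  have hmain : (∫ x in {x : ℝ | |x| > 1/2}, (Real.exp (Real.pi * u x ^ 2) - 1))
      ≤ ∫ x in {x : ℝ | |x| > 1/2}, (Real.pi * u x ^ 2 + G x) := by
    refine integral_mono_of_nonneg ?_ hgR ?_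
    · refine Filter.Eventually.of_forall fun x => ?_
      have h0 : (0:ℝ) ≤ Real.pi * u x ^ 2 := by positivity
      have := Real.one_le_exp h0
      simp only [Pi.zero_apply]
      linarith
    · refine (ae_restrict_iff' hRmeas).2 (Filter.Eventually.of_forall fun x hx => ?_)
      simp only [Set.mem_setOf_eq] at hx
      have hux : u x ^ 2 = u |x| ^ 2 := by
        rcases abs_cases x with ⟨h, _⟩ | ⟨h, _⟩
        · rw [h]
        · rw [h, heven]
      have hb := hkey |x| (le_of_lt hx)
      have ht : Real.pi * u x ^ 2 ≤ a / (2 * |x|) := by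
        rw [hux]
        calc Real.pi * u |x| ^ 2 ≤ Real.pi * (I / (2 * |x|)) :=
              mul_le_mul_of_nonneg_left hb hpi.le
          _ = a / (2 * |x|) := by rw [hadef]; ring
      have ht0 : (0:ℝ) ≤ Real.pi * u x ^ 2 := by positivity
      have := aux_exp_mono ht0 ht
      simp only [hGdef]
      linarith
  have hsplit : ∫ x in {x : ℝ | |x| > 1/2}, (Real.pi * u x ^ 2 + G x)
      = (∫ x in {x : ℝ | |x| > 1/2}, Real.pi * u x ^ 2)
        + ∫ x in {x : ℝ | |x| > 1/2}, G x :=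
    integral_add (hint.integrableOn.const_mul _) hGR
  have h1 : ∫ x in {x : ℝ | |x| > 1/2}, Real.pi * u x ^ 2
      = Real.pi * ∫ x in {x : ℝ | |x| > 1/2}, u x ^ 2 := integral_const_mul _ _
  have h2 : ∫ x in {x : ℝ | |x| > 1/2}, u x ^ 2 ≤ I := by
    rw [hIdef]
    exact setIntegral_le_integral hint (Filter.Eventually.of_forall fun x => sq_nonneg _)
  have hGRval : ∫ x in {x : ℝ | |x| > 1/2}, G x
      = 2 * ∑' k : ℕ, c k * ((2:ℝ)^(k+1:ℕ)/((k:ℝ)+1)) := by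
    rw [hR, setIntegral_union hdisj measurableSet_Ioi hGintIio hGintIoi, hGeq, hGIoi_val]
    ring
  -- final arithmetic
  have e1 : 2 * ∑' k : ℕ, c k * ((2:ℝ)^(k+1:ℕ)/((k:ℝ)+1))
      = ∑' k : ℕ, a^(k+2) / ((Nat.factorial (k+2) : ℝ) * ((k:ℝ)+1)) := by
    rw [← tsum_mul_left]
    refine tsum_congr fun k => ?_
    simp only [hcdef]
    rw [div_pow]
    field_simp
    first | ring1 | (right; ring1) | (left; ring1)
  have e2 : a * (1 + ∑' k : ℕ, a^(k+1) / ((Nat.factorial (k+2) : ℝ) * ((k:ℝ)+1)))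
      = a + ∑' k : ℕ, a^(k+2) / ((Nat.factorial (k+2) : ℝ) * ((k:ℝ)+1)) := by
    rw [mul_add, mul_one, ← tsum_mul_left]
    congr 1
    refine tsum_congr fun k => ?_
    rw [show a^(k+2) = a * a^(k+1) by rw [pow_succ]; ring]
    ring
  calc (∫ x in {x : ℝ | |x| > 1/2}, (Real.exp (Real.pi * u x ^ 2) - 1))
      ≤ ∫ x in {x : ℝ | |x| > 1/2}, (Real.pi * u x ^ 2 + G x) := hmain
    _ = Real.pi * (∫ x in {x : ℝ | |x| > 1/2}, u x ^ 2)
        + ∫ x in {x : ℝ | |x| > 1/2}, G x := by rw [hsplit, h1]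
    _ ≤ Real.pi * I + ∫ x in {x : ℝ | |x| > 1/2}, G x := by
        have := mul_le_mul_of_nonneg_left h2 hpi.le
        linarith
    _ = Real.pi * I + ∑' k : ℕ, a^(k+2) / ((Nat.factorial (k+2) : ℝ) * ((k:ℝ)+1)) := by
        rw [hGRval, e1]
    _ = a * (1 + ∑' k : ℕ, a^(k+1) / ((Nat.factorial (k+2) : ℝ) * ((k:ℝ)+1))) := by
        rw [e2, hadef]
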